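/- arXiv:1209.5352 — 2 statements merged into one kernel-verified Lean document; each statement's English description precedes it below -/
import Mathlib

section
/- Let V be a finite-dimensional vector space over a field k, σ a permutation of {1,...,n} acting on V^{⊗n} by permuting tensor factors, and g_1,...,g_n ∈ End(V). Then Tr_{V^{⊗n}}(σ ∘ (g_1 ⊗ ... ⊗ g_n)) = Π_{(i_1,...,i_k) \text{ cycle of } σ} Tr_V(g_{i_k} ⋯ g_{i_1}), the product being over the cycles of σ (with the indices of each cycle listed in cyclic order). -/
open scoped TensorProduct


/-- The set of minimal representatives of the cycles (orbits) of a permutation `σ`: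
those `j` that are minimal in their `σ`-orbit.  Fixed points count as cycles of length 1. -/
def cycleReps {n : ℕ} (σ : Equiv.Perm (Fin n)) : Finset (Fin n) :=
  Finset.univ.filter fun j => ∀ x : Fin n, σ.SameCycle j x → j ≤ x

/-- The product of `g` along the cycle `(i_1, …, i_k)` of `σ` through `j`, listed in cyclic
order `i_1 = j, i_2 = σ(j), …, i_k = σ^{k-1}(j)`: the ordered product `g_{i_k} ⋯ g_{i_1}`.
Here `k = orderOf (σ.cycleOf j)` is the length of the cycle of `σ` containing `j`
(equal to `1` for a fixed point). -/
noncomputable def cycleProd {n : ℕ} {M : Type*} [Monoid M] (σ : Equiv.Perm (Fin n))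
    (g : Fin n → M) (j : Fin n) : M :=
  (((List.range (orderOf (σ.cycleOf j))).reverse).map fun t => g ((σ ^ t) j)).prod


/-- The action of a permutation `σ` of `{1,…,n}` on the `n`-th tensor power `V^{⊗n}`,
permuting the tensor factors: `v_1 ⊗ ⋯ ⊗ v_n ↦ v_{σ⁻¹(1)} ⊗ ⋯ ⊗ v_{σ⁻¹(n)}`. -/
noncomputable def permAction (k : Type*) [Field k] (V : Type*) [AddCommGroup V] [Module k V]
    (n : ℕ) (σ : Equiv.Perm (Fin n)) : Module.End k (⨂[k] (_ : Fin n), V) :=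
  PiTensorProduct.lift ((PiTensorProduct.tprod k).domDomCongr σ⁻¹)

namespace StmtAux

variable {n : ℕ} (σ : Equiv.Perm (Fin n))

lemma pow_apply_eq_iff (j : Fin n) (s t : ℕ) :
    (σ ^ s) j = (σ ^ t) j ↔
      s % orderOf (σ.cycleOf j) = t % orderOf (σ.cycleOf j) := by
  constructor
  · intro h
    by_cases hj : σ j = j
    · have : σ.cycleOf j = 1 := by
        rwa [Equiv.Perm.cycleOf_eq_one_iff]
      simp [this, Nat.mod_one]
    · have hc := σ.isCycleOn_support_cycleOf j
      have hjm : j ∈ (σ.cycleOf j).support := by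
        rw [Equiv.Perm.mem_support_cycleOf_iff' hj]
      have := (hc.pow_apply_eq_pow_apply hjm).mp h
      rwa [(Equiv.Perm.isCycle_cycleOf σ hj).orderOf]
  · intro h
    rw [← σ.pow_mod_orderOf_cycleOf_apply s j, ← σ.pow_mod_orderOf_cycleOf_apply t j, h]

lemma exists_rep (i : Fin n) : ∃ j ∈ cycleReps σ, σ.SameCycle j i := by
  classical
  have hne : (Finset.univ.filter fun x => σ.SameCycle x i).Nonempty :=
    ⟨i, by simp [Equiv.Perm.SameCycle.refl]⟩
  have hmem := Finset.min'_mem _ hne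
  rw [Finset.mem_filter] at hmem
  refine ⟨_, ?_, hmem.2⟩
  rw [cycleReps, Finset.mem_filter]
  refine ⟨Finset.mem_univ _, fun x hx => ?_⟩
  apply Finset.min'_le
  rw [Finset.mem_filter]
  exact ⟨Finset.mem_univ _, hx.symm.trans hmem.2⟩

/-- The index type: pairs (cycle representative, position in cycle). -/
abbrev Idx : Type := Σ j : {j : Fin n // j ∈ cycleReps σ}, Fin (orderOf (σ.cycleOf j.1))

noncomputable def φ : Idx σ → Fin n := fun p => (σ ^ (p.2 : ℕ)) p.1.1

lemma sameCycle_pow (j : Fin n) (t : ℕ) : σ.SameCycle j ((σ ^ t) j) :=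
  ⟨(t : ℤ), by simp [zpow_natCast]⟩

lemma φ_bijective : Function.Bijective (φ σ) := by
  constructor
  · rintro ⟨⟨j, hj⟩, t⟩ ⟨⟨j', hj'⟩, t'⟩ h
    simp only [φ] at h
    have hcyc : σ.SameCycle j j' :=
      ((sameCycle_pow σ j t).trans (h ▸ (sameCycle_pow σ j' t').symm))
    rw [cycleReps, Finset.mem_filter] at hj hj'
    have hjj' : j = j' := le_antisymm (hj.2 j' hcyc) (hj'.2 j hcyc.symm)
    subst hjj'
    have := (pow_apply_eq_iff σ j t t').mp h
    rw [Nat.mod_eq_of_lt t.isLt, Nat.mod_eq_of_lt t'.isLt] at this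
    simp [Fin.ext_iff, this]
  · intro i
    obtain ⟨j, hj, hsc⟩ := exists_rep σ i
    obtain ⟨z, hz, hzeq⟩ := hsc.exists_pow_eq'
    have hm : 0 < orderOf (σ.cycleOf j) := orderOf_pos _
    refine ⟨⟨⟨j, hj⟩, ⟨z % orderOf (σ.cycleOf j), Nat.mod_lt _ hm⟩⟩, ?_⟩
    simp only [φ]
    rw [σ.pow_mod_orderOf_cycleOf_apply z j]
    exact hzeq

variable {k : Type*} [CommRing k] {ιt : Type*} [Fintype ιt] [DecidableEq ιt]

lemma listProd_entry (M : ℕ → Matrix ιt ιt k) :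
    ∀ (m : ℕ) (a b : ιt),
      (((List.range m).reverse.map M).prod) a b
        = ∑ x : Fin (m + 1) → ιt,
            if x 0 = b ∧ x (Fin.last m) = a then
              ∏ t : Fin m, M t (x t.succ) (x t.castSucc)
            else 0 := by
  intro m
  induction m with
  | zero =>
    intro a b
    rw [show (((List.range 0).reverse.map M).prod) = 1 by simp]
    rw [← (Equiv.funUnique (Fin 1) ιt).symm.sum_comp]
    simp [Matrix.one_apply, ite_and, eq_comm, Fin.last]
  | succ m ih =>
    intro a b
    have hsplit : ((List.range (m + 1)).reverse.map M).prod
        = M m * ((List.range m).reverse.map M).prod := by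
      rw [List.range_succ, List.reverse_append]
      simp
    rw [hsplit, Matrix.mul_apply]
    simp_rw [ih, Finset.mul_sum]
    rw [← (Fin.snocEquiv (fun _ : Fin (m + 1 + 1) => ιt)).sum_comp, Fintype.sum_prod_type]
    rw [Finset.sum_comm]
    conv_rhs => rw [Finset.sum_comm]
    apply Finset.sum_congr rfl
    intro x _
    simp only [Fin.snocEquiv_apply]
    have hz : ∀ c : ιt, Fin.snoc (α := fun _ : Fin (m + 2) => ιt) x c 0 = x 0 := by
      intro c
      rw [show (0 : Fin (m + 2)) = Fin.castSucc 0 from rfl, Fin.snoc_castSucc]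
    simp only [Fin.snoc_last, hz, Fin.prod_univ_castSucc, Fin.succ_castSucc, Fin.snoc_castSucc,
      Fin.succ_last, Fin.coe_castSucc, Fin.val_last, mul_ite, mul_zero, ite_and]
    by_cases hb : x 0 = b
    · simp [hb, Finset.sum_ite_eq, Finset.sum_ite_eq', mul_comm, mul_assoc, mul_left_comm]
    · simp [hb]

lemma trace_listProd (M : ℕ → Matrix ιt ιt k) (m : ℕ) (hm : 0 < m) :
    Matrix.trace (((List.range m).reverse.map M).prod)
      = ∑ x : Fin m → ιt,
          ∏ t : Fin m, M t (x ⟨((t : ℕ) + 1) % m, Nat.mod_lt _ hm⟩) (x t) := by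
  rw [Matrix.trace]
  simp only [Matrix.diag_apply, listProd_entry]
  rw [Finset.sum_comm]
  have hcollapse : ∀ y : Fin (m + 1) → ιt,
      (∑ a : ιt, if y 0 = a ∧ y (Fin.last m) = a then
          ∏ t : Fin m, M t (y t.succ) (y t.castSucc) else 0)
      = if y (Fin.last m) = y 0 then ∏ t : Fin m, M t (y t.succ) (y t.castSucc) else 0 := by
    intro y
    simp [ite_and, Finset.sum_ite_eq]
  simp_rw [hcollapse]
  rw [← Finset.sum_filter]
  refine Finset.sum_nbij' (i := fun y => y ∘ Fin.castSucc)
    (j := fun x => fun s : Fin (m + 1) => x ⟨(s : ℕ) % m, Nat.mod_lt _ hm⟩)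
    ?_ ?_ ?_ ?_ ?_
  · intro y _; exact Finset.mem_univ _
  · intro x _
    rw [Finset.mem_filter]
    exact ⟨Finset.mem_univ _, congrArg x (by ext; simp [Nat.mod_self])⟩
  · intro y hy
    rw [Finset.mem_filter] at hy
    funext s
    rcases lt_or_eq_of_le (Nat.lt_succ_iff.mp s.isLt) with hs | hs
    · exact congrArg y (by ext; simp [Nat.mod_eq_of_lt hs])
    · have hsl : s = Fin.last m := by ext; simpa using hs
      subst hsl
      refine (congrArg y ?_).trans hy.2.symm
      ext
      simp [Nat.mod_self]
  · intro x _
    funext t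
    exact congrArg x (by ext; simp [Nat.mod_eq_of_lt t.isLt])
  · intro y hy
    rw [Finset.mem_filter] at hy
    refine Finset.prod_congr rfl fun t _ => ?_
    have hsnd : y t.castSucc = (y ∘ Fin.castSucc) t := rfl
    have hfst : y t.succ
        = (y ∘ Fin.castSucc) ⟨((t : ℕ) + 1) % m, Nat.mod_lt _ hm⟩ := by
      rcases Nat.lt_or_ge ((t : ℕ) + 1) m with hlt | hge
      · exact congrArg y (by ext; simp [Fin.val_succ, Nat.mod_eq_of_lt hlt])
      · have hem : (t : ℕ) + 1 = m := le_antisymm t.isLt hge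
        have h1 : y t.succ = y (Fin.last m) := congrArg y (by ext; simp [Fin.val_succ, hem])
        rw [h1, hy.2]
        exact congrArg y (by ext; simp [hem, Nat.mod_self])
    rw [hfst, hsnd]

variable {k : Type*} [Field k] {V : Type*} [AddCommGroup V] [Module k V]
variable {ιb : Type*} [Fintype ιb] [DecidableEq ιb]

noncomputable def finSuccTensorEquiv (n : ℕ) :
    (⨂[k] (_ : Fin (n + 1)), V) ≃ₗ[k] V ⊗[k] (⨂[k] (_ : Fin n), V) :=
  (PiTensorProduct.reindex k (fun _ : Fin (n + 1) => V)
      ((finCongr (Nat.add_comm n 1)).trans finSumFinEquiv.symm)).trans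
    ((PiTensorProduct.tmulEquiv k V).symm.trans
      (TensorProduct.congr (PiTensorProduct.subsingletonEquiv (0 : Fin 1))
        (LinearEquiv.refl k _)))

lemma finSuccTensorEquiv_tprod (n : ℕ) (v : Fin (n + 1) → V) :
    finSuccTensorEquiv (k := k) n (PiTensorProduct.tprod k v)
      = v 0 ⊗ₜ[k] PiTensorProduct.tprod k (fun i => v i.succ) := by
  rw [finSuccTensorEquiv]
  simp only [LinearEquiv.trans_apply, PiTensorProduct.reindex_tprod,
    PiTensorProduct.tmulEquiv_symm_apply, TensorProduct.congr_tmul,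
    PiTensorProduct.subsingletonEquiv_apply_tprod, LinearEquiv.refl_apply]
  congr 1
  exact congrArg (PiTensorProduct.tprod k)
    (funext fun i => congrArg v (by ext; simp [Nat.add_comm]))

noncomputable def piBasis (b : Module.Basis ιb k V) : ∀ n : ℕ, Module.Basis (Fin n → ιb) k (⨂[k] (_ : Fin n), V)
  | 0 => ((Module.Basis.singleton (Fin 0 → ιb) k).map (PiTensorProduct.isEmptyEquiv (Fin 0)).symm)
  | (n + 1) =>
    ((Module.Basis.tensorProduct b (piBasis b n)).map (finSuccTensorEquiv n).symm).reindex
      (Fin.consEquiv fun _ => ιb)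

lemma piBasis_repr_tprod (b : Module.Basis ιb k V) :
    ∀ (n : ℕ) (v : Fin n → V) (f : Fin n → ιb),
      (piBasis b n).repr (PiTensorProduct.tprod k v) f = ∏ i, b.repr (v i) (f i)
  | 0, v, f => by
    have hf : f = default := Subsingleton.elim _ _
    subst hf
    simp [piBasis, Module.Basis.singleton]
  | (n + 1), v, f => by
    rw [piBasis, Module.Basis.repr_reindex, Finsupp.mapDomain_equiv_apply, Module.Basis.map_repr]
    simp only [LinearEquiv.trans_apply, Module.Basis.map_repr, LinearEquiv.symm_symm,
      Fin.consEquiv_symm_apply, finSuccTensorEquiv_tprod]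
    rw [Module.Basis.tensorProduct_repr_tmul_apply]
    rw [piBasis_repr_tprod b n]
    rw [Fin.prod_univ_succ]
    rw [smul_eq_mul, mul_comm]
    rfl

section Glue

variable {n : ℕ} {R : Type*} [CommSemiring R] {ιt : Type*} [Fintype ιt] [DecidableEq ιt]

/-- The index equivalence: `Fin n` is equivalent to pairs (cycle representative, position). -/
noncomputable def E (σ : Equiv.Perm (Fin n)) : Fin n ≃ Idx σ :=
  (Equiv.ofBijective (φ σ) (φ_bijective σ)).symm

noncomputable def eqv (σ : Equiv.Perm (Fin n)) (ιt : Type*) :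
    (Fin n → ιt) ≃ ∀ j : {j : Fin n // j ∈ cycleReps σ}, Fin (orderOf (σ.cycleOf j.1)) → ιt :=
  (Equiv.piCongrLeft' (fun _ => ιt) (E σ)).trans (Equiv.piCurry fun _ _ => ιt)

lemma eqv_apply (σ : Equiv.Perm (Fin n)) (f : Fin n → ιt)
    (j : {j : Fin n // j ∈ cycleReps σ}) (t : Fin (orderOf (σ.cycleOf j.1))) :
    eqv σ ιt f j t = f ((σ ^ (t : ℕ)) j.1) := by
  simp only [eqv, Equiv.trans_apply, Equiv.piCurry_apply, Sigma.curry,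
    Equiv.piCongrLeft'_apply]
  congr 1

lemma sum_prod_cycles (σ : Equiv.Perm (Fin n)) (F : Fin n → ιt → ιt → R) :
    ∑ f : Fin n → ιt, ∏ i, F i (f (σ i)) (f i)
      = ∏ j ∈ cycleReps σ, ∑ x : Fin (orderOf (σ.cycleOf j)) → ιt,
          ∏ t : Fin (orderOf (σ.cycleOf j)), F ((σ ^ (t : ℕ)) j)
            (x ⟨((t : ℕ) + 1) % orderOf (σ.cycleOf j), Nat.mod_lt _ (orderOf_pos _)⟩)
            (x t) := by
  classical
  rw [← Finset.prod_coe_sort (cycleReps σ)]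
  rw [Finset.prod_univ_sum (fun j : {j : Fin n // j ∈ cycleReps σ} =>
    (Finset.univ : Finset (Fin (orderOf (σ.cycleOf j.1)) → ιt)))]
  rw [Fintype.piFinset_univ]
  refine Fintype.sum_equiv (eqv σ ιt) _ _ ?_
  intro f
  have step : ∀ (j : {j : Fin n // j ∈ cycleReps σ}) (t : Fin (orderOf (σ.cycleOf j.1))),
      F ((σ ^ (t : ℕ)) j.1)
        (eqv σ ιt f j ⟨((t : ℕ) + 1) % orderOf (σ.cycleOf j.1), Nat.mod_lt _ (orderOf_pos _)⟩)
        (eqv σ ιt f j t)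
      = F (φ σ ⟨j, t⟩) (f (σ (φ σ ⟨j, t⟩))) (f (φ σ ⟨j, t⟩)) := by
    intro j t
    rw [eqv_apply, eqv_apply, σ.pow_mod_orderOf_cycleOf_apply]
    congr 2
    rw [φ]
    rw [pow_succ', Equiv.Perm.mul_apply]
  calc ∏ i, F i (f (σ i)) (f i)
      = ∏ p : Idx σ, F (φ σ p) (f (σ (φ σ p))) (f (φ σ p)) :=
        (Equiv.prod_comp (Equiv.ofBijective (φ σ) (φ_bijective σ))
          (fun i => F i (f (σ i)) (f i))).symm
    _ = ∏ j : {j : Fin n // j ∈ cycleReps σ}, ∏ t : Fin (orderOf (σ.cycleOf j.1)),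
          F (φ σ ⟨j, t⟩) (f (σ (φ σ ⟨j, t⟩))) (f (φ σ ⟨j, t⟩)) := by
        rw [← Finset.univ_sigma_univ, Finset.prod_sigma]
    _ = _ := by
        refine Finset.prod_congr rfl fun j _ => Finset.prod_congr rfl fun t _ => ?_
        exact (step j t).symm

end Glue

section Tensor

variable {k : Type*} [Field k] {V : Type*} [AddCommGroup V] [Module k V]
variable {ιb : Type*} [Fintype ιb] [DecidableEq ιb]

lemma piBasis_apply (b : Module.Basis ιb k V) (n : ℕ) (f : Fin n → ιb) :
    piBasis b n f = PiTensorProduct.tprod k (fun i => b (f i)) := by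
  rw [Module.Basis.apply_eq_iff]
  ext f'
  rw [piBasis_repr_tprod]
  simp only [Module.Basis.repr_self]
  by_cases h : f' = f
  · subst h
    simp [Finsupp.single_apply]
  · obtain ⟨i, hi⟩ := Function.ne_iff.mp h
    rw [Finsupp.single_apply, if_neg (by exact fun hc => h hc.symm)]
    refine Finset.prod_eq_zero (Finset.mem_univ i) ?_
    rw [Finsupp.single_apply, if_neg (fun hc => hi hc.symm)]

lemma permAction_tprod (n : ℕ) (σ : Equiv.Perm (Fin n)) (v : Fin n → V) :
    permAction k V n σ (PiTensorProduct.tprod k v)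
      = PiTensorProduct.tprod k (fun i => v (σ⁻¹ i)) := by
  rw [permAction, PiTensorProduct.lift.tprod]
  rfl

end Tensor

end StmtAux

/-- Let `V` be a finite-dimensional vector space over a field `k`, `σ` a
permutation of `{1,…,n}` acting on `V^{⊗n}` by permuting the tensor factors, and
`g_1, …, g_n ∈ End(V)`.  Then
`Tr_{V^{⊗n}}(σ ∘ (g_1 ⊗ ⋯ ⊗ g_n)) = Π_{(i_1,…,i_k) cycle of σ} Tr_V(g_{i_k} ⋯ g_{i_1})`,
the product being over the cycles of `σ` (with the indices of each cycle listed in cyclic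
order); the product runs over the minimal representatives `j` of the orbits of `σ`. -/
theorem stmt_8 (k : Type*) [Field k] (V : Type*) [AddCommGroup V] [Module k V]
    [FiniteDimensional k V] (n : ℕ) (σ : Equiv.Perm (Fin n)) (g : Fin n → Module.End k V) :
    LinearMap.trace k (⨂[k] (_ : Fin n), V)
        (permAction k V n σ ∘ₗ PiTensorProduct.map fun i => g i)
      = ∏ j ∈ cycleReps σ, LinearMap.trace k V (cycleProd σ g j) := by
  classical
  set b : Module.Basis (Fin (Module.finrank k V)) k V := Module.finBasis k V with hb
  set B := StmtAux.piBasis b n with hB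
  haveI : Module.Free k (⨂[k] (_ : Fin n), V) := Module.Free.of_basis B
  haveI : Module.Finite k (⨂[k] (_ : Fin n), V) := Module.Finite.of_basis B
  set A : Fin n → Matrix (Fin (Module.finrank k V)) (Fin (Module.finrank k V)) k :=
    fun j => LinearMap.toMatrix b b (g j) with hA
  have hprodmat : ∀ L : List (Module.End k V),
      LinearMap.toMatrix b b L.prod = (L.map (LinearMap.toMatrix b b)).prod := by
    intro L
    induction L with
    | nil => simp [Module.End.one_eq_id, LinearMap.toMatrix_id]
    | cons x L ih =>
      rw [List.prod_cons, List.map_cons, List.prod_cons, ← ih, ← LinearMap.toMatrix_mul]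
  -- Left-hand side
  rw [LinearMap.trace_eq_matrix_trace k B, Matrix.trace]
  have hentry : ∀ f : Fin n → Fin (Module.finrank k V),
      (LinearMap.toMatrix B B
          (permAction k V n σ ∘ₗ PiTensorProduct.map fun i => g i)).diag f
        = ∏ i, A i (f (σ i)) (f i) := by
    intro f
    rw [Matrix.diag_apply, LinearMap.toMatrix_apply]
    rw [hB, StmtAux.piBasis_apply]
    rw [LinearMap.comp_apply, PiTensorProduct.map_tprod, StmtAux.permAction_tprod]
    rw [StmtAux.piBasis_repr_tprod]
    have : ∀ i, (b.repr ((g (σ⁻¹ i)) (b (f (σ⁻¹ i))))) (f i)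
        = A (σ⁻¹ i) (f i) (f (σ⁻¹ i)) := by
      intro i
      exact (LinearMap.toMatrix_apply b b (g (σ⁻¹ i)) (f i) (f (σ⁻¹ i))).symm
    rw [Finset.prod_congr rfl fun i _ => this i]
    have := Equiv.prod_comp (σ⁻¹ : Equiv.Perm (Fin n))
      (fun i => A i (f (σ i)) (f i))
    rw [← this]
    refine Finset.prod_congr rfl fun i _ => ?_
    rw [Equiv.Perm.inv_def, Equiv.apply_symm_apply]
  rw [Finset.sum_congr rfl fun f _ => hentry f]
  rw [StmtAux.sum_prod_cycles σ (fun i a c => A i a c)]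
  -- Right-hand side, cycle by cycle
  refine Finset.prod_congr rfl fun j _ => ?_
  rw [LinearMap.trace_eq_matrix_trace k b, cycleProd, hprodmat, List.map_map]
  simp only [Function.comp_def]
  rw [StmtAux.trace_listProd (fun t => LinearMap.toMatrix b b (g ((σ ^ t) j)))
    (orderOf (σ.cycleOf j)) (orderOf_pos _)]
end

section
/- Let W, Z, T be schemes of finite type over a finite field F_q, with Z smooth over F_q. Let h = (h_1, h_2) : W → Z × T be an étale morphism and f : W → Z an arbitrary morphism over F_q. Define U to be the closed subscheme (equalizer) of W given by U = {w ∈ W : h_1(w) = Frob_Z(f(w))}, where Frob_Z is the q-power absolute Frobenius of Z. Then the restriction h_2 : U → T is étale. -/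
open TensorProduct

section Aux

variable {F : Type} [Field F] [Fintype F]

lemma aux_add_pow_card {R : Type*} [CommRing R] (φ : F →+* R) (x y : R) :
    (x + y) ^ Fintype.card F = x ^ Fintype.card F + y ^ Fintype.card F := by
  rcases subsingleton_or_nontrivial R with h | h
  · exact Subsingleton.elim _ _
  · haveI : CharP R (ringChar F) := charP_of_injective_ringHom φ.injective (ringChar F)
    obtain ⟨n, hp, hcard⟩ := FiniteField.card F (ringChar F)
    haveI : Fact (Nat.Prime (ringChar F)) := ⟨hp⟩
    rw [hcard]
    exact add_pow_char_pow x y (ringChar F) n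

/-- `x ↦ x ^ #F` as a ring homomorphism on any ring admitting a map from `F`. -/
def auxPowQ {R : Type*} [CommRing R] (φ : F →+* R) : R →+* R where
  toFun x := x ^ Fintype.card F
  map_one' := one_pow _
  map_mul' x y := mul_pow x y _
  map_zero' := zero_pow Fintype.card_ne_zero
  map_add' := aux_add_pow_card φ

@[simp] lemma auxPowQ_apply {R : Type*} [CommRing R] (φ : F →+* R) (x : R) :
    auxPowQ φ x = x ^ Fintype.card F := rfl

end Aux

/-!
**STATEMENT 18.**  Let `W, Z, T` be schemes of finite type over a finite field `F_q`, with `Z`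
smooth over `F_q`.  Let `h = (h₁, h₂) : W → Z × T` be an étale morphism and `f : W → Z` an
arbitrary morphism over `F_q`.  Define `U` to be the closed subscheme (equalizer) of `W` given
by `U = {w ∈ W : h₁(w) = Frob_Z (f (w))}`, where `Frob_Z` is the `q`-power absolute Frobenius
of `Z`.  Then the restriction `h₂ : U → T` is étale.

Affine/algebraic encoding (the statement is Zariski-local, and the scheme-theoretic Frobenius
is not available in Mathlib): `F` is a finite field with `q = #F` elements; `T = Spec A`,
`Z = Spec C`, `W = Spec B` with `A, B, C` finite-type `F`-algebras and `C` smooth;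
`h : W → Z × T` corresponds to the `F`-algebra map `C ⊗[F] A → B` induced by the pair
`(h₁ : C →ₐ[F] B, h₂ : A →ₐ[F] B)`, and it is étale (`Algebra.Etale` for the induced algebra
structure); `f : W → Z` corresponds to `fC : C →ₐ[F] B`; the Frobenius `Frob_Z` corresponds to
`c ↦ c^q` on `C`, so the equalizer `U` is `Spec (B/I)` where `I` is generated by all
`h₁ c − fC (c^q)`; and `h₂ : U → T` corresponds to `A → B/I`.
-/
theorem stmt_18 (F : Type) [Field F] [Fintype F]
    (A B C : Type) [CommRing A] [CommRing B] [CommRing C]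
    [Algebra F A] [Algebra F B] [Algebra F C]
    (hA : Algebra.FiniteType F A) (hB : Algebra.FiniteType F B)
    (hC : Algebra.FiniteType F C)
    -- `Z = Spec C` is smooth over `F_q`
    (hCsm : Algebra.Smooth F C)
    -- `h = (h₁, h₂) : W → Z × T` is étale
    (h₁ : C →ₐ[F] B) (h₂ : A →ₐ[F] B)
    (hEt : @Algebra.Etale (C ⊗[F] A) B _ _
      (RingHom.toAlgebra (Algebra.TensorProduct.productMap h₁ h₂).toRingHom))
    -- `f : W → Z` arbitrary
    (fC : C →ₐ[F] B)
    -- `U ⊆ W` : the equalizer of `h₁` and `Frob_Z ∘ f`, with `q = #F`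
    (I : Ideal B) (hI : I = Ideal.span {x | ∃ c : C, x = h₁ c - fC (c ^ Fintype.card F)}) :
    -- `h₂ : U → T` is étale
    @Algebra.Etale A (B ⧸ I) _ _
      (RingHom.toAlgebra ((Ideal.Quotient.mk I).comp h₂.toRingHom)) := by
  letI : Algebra A (B ⧸ I) := RingHom.toAlgebra ((Ideal.Quotient.mk I).comp h₂.toRingHom)
  letI : Algebra (C ⊗[F] A) B :=
    RingHom.toAlgebra (Algebra.TensorProduct.productMap h₁ h₂).toRingHom
  haveI hFE : Algebra.FormallyEtale (C ⊗[F] A) B := hEt.formallyEtale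
  have hgen : ∀ c : C,
      Ideal.Quotient.mk I (h₁ c) = Ideal.Quotient.mk I (fC (c ^ Fintype.card F)) := by
    intro c
    rw [Ideal.Quotient.mk_eq_mk_iff_sub_mem, hI]
    exact Ideal.subset_span ⟨c, rfl⟩
  refine { formallyEtale := ?_, finitePresentation := ?_ }
  · refine Algebra.FormallyEtale.iff_comp_bijective.mpr ?_
    intro R' _ _ J hJ
    rcases subsingleton_or_nontrivial R' with hR' | hR'
    · haveI : Subsingleton (R' ⧸ J) := Ideal.Quotient.mk_surjective.subsingleton
      constructor
      · intro g₁ g₂ _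
        ext x
        exact Subsingleton.elim _ _
      · intro gbar
        refine ⟨{ toFun := fun _ => 0,
                  map_one' := Subsingleton.elim _ _,
                  map_mul' := fun _ _ => Subsingleton.elim _ _,
                  map_zero' := rfl,
                  map_add' := fun _ _ => Subsingleton.elim _ _,
                  commutes' := fun _ => Subsingleton.elim _ _ }, ?_⟩
        ext x
        exact Subsingleton.elim _ _
    -- the interesting case
    letI : Algebra F R' := ((algebraMap A R').comp (algebraMap F A)).toAlgebra
    set q := Fintype.card F with hq
    have hq2 : 2 ≤ q := Fintype.one_lt_card
    -- the q-power Frobenius on R', factored through R'/J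
    set φ' : F →+* R' := (algebraMap A R').comp (algebraMap F A) with hφ'
    have hkill : ∀ x ∈ J, auxPowQ φ' x = 0 := by
      intro x hx
      have h2 : x ^ 2 = 0 := by
        have := Ideal.pow_mem_pow hx 2
        rw [hJ] at this
        simpa using this
      have : x ^ q = x ^ 2 * x ^ (q - 2) := by
        rw [← pow_add]
        congr 1
        omega
      simp only [auxPowQ_apply, ← hq, this, h2, zero_mul]
    set Φ : R' ⧸ J →+* R' := Ideal.Quotient.lift J (auxPowQ φ') hkill with hΦ
    have hΦmk : ∀ x : R', Φ (Ideal.Quotient.mk J x) = x ^ q := fun x => rfl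
    -- main existence-and-uniqueness statement
    have main : ∀ gbar : (B ⧸ I) →ₐ[A] R' ⧸ J,
        ∃! g : (B ⧸ I) →ₐ[A] R', (Ideal.Quotient.mkₐ A J).comp g = gbar := by
      intro gbar
      -- ρ : C →+* R', c ↦ (any lift of gbar (fC c mod I)) ^ q
      set ρ : C →+* R' :=
        Φ.comp (gbar.toRingHom.comp ((Ideal.Quotient.mk I).comp fC.toRingHom)) with hρ
      have hρc : ∀ c : C, ρ c = Φ (gbar (Ideal.Quotient.mk I (fC c))) := fun c => rfl
      -- ρ is F-linear
      have hmkF : ∀ a : F, Ideal.Quotient.mk I (algebraMap F B a)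
          = algebraMap A (B ⧸ I) (algebraMap F A a) := by
        intro a
        show _ = ((Ideal.Quotient.mk I).comp h₂.toRingHom) (algebraMap F A a)
        simp [h₂.commutes]
      have hρF : ∀ a : F, ρ (algebraMap F C a) = algebraMap F R' a := by
        intro a
        rw [hρc, fC.commutes, hmkF, gbar.commutes]
        have : algebraMap A (R' ⧸ J) (algebraMap F A a)
            = Ideal.Quotient.mk J (algebraMap F R' a) := by
          rw [← Ideal.Quotient.mk_algebraMap]
          rfl
        rw [this, hΦmk, ← map_pow, FiniteField.pow_card]
      set αC : C →ₐ[F] R' := { ρ with commutes' := hρF } with hαC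
      set αA : A →ₐ[F] R' := { algebraMap A R' with commutes' := fun a => rfl } with hαA
      set ψ : C ⊗[F] A →ₐ[F] R' := Algebra.TensorProduct.productMap αC αA with hψ
      letI : Algebra (C ⊗[F] A) R' := ψ.toRingHom.toAlgebra
      -- the reduction of any candidate lift is determined
      have hψtmul : ∀ (c : C) (a : A), ψ (c ⊗ₜ[F] a) = ρ c * algebraMap A R' a := by
        intro c a
        rw [hψ, Algebra.TensorProduct.productMap_apply_tmul]
        rfl
      -- gB' : B →ₐ[C⊗A] R'/J induced by gbar
      have claim1 : ∀ c : C, gbar (Ideal.Quotient.mk I (h₁ c)) = Ideal.Quotient.mk J (ρ c) := by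
        intro c
        obtain ⟨x, hx⟩ := Ideal.Quotient.mk_surjective (gbar (Ideal.Quotient.mk I (fC c)))
        rw [hρc, ← hx, hΦmk, map_pow, hx]
        rw [hgen c, map_pow, map_pow, map_pow]
      have claim2 : ∀ a : A, gbar (Ideal.Quotient.mk I (h₂ a))
          = Ideal.Quotient.mk J (algebraMap A R' a) := by
        intro a
        have : Ideal.Quotient.mk I (h₂ a) = algebraMap A (B ⧸ I) a := rfl
        rw [this, gbar.commutes, ← Ideal.Quotient.mk_algebraMap]
      have key : ∀ x : C ⊗[F] A,
          gbar (Ideal.Quotient.mk I (Algebra.TensorProduct.productMap h₁ h₂ x))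
            = Ideal.Quotient.mk J (ψ x) := by
        intro x
        induction x using TensorProduct.induction_on with
        | zero => simp
        | tmul c a =>
            rw [Algebra.TensorProduct.productMap_apply_tmul, hψtmul, map_mul, map_mul,
              map_mul, claim1 c, claim2 a]
        | add x y hx hy => simp [map_add, hx, hy]
      set gB' : B →ₐ[C ⊗[F] A] R' ⧸ J :=
        { toRingHom := gbar.toRingHom.comp (Ideal.Quotient.mk I),
          commutes' := by
            intro x
            have h1 : algebraMap (C ⊗[F] A) B x = Algebra.TensorProduct.productMap h₁ h₂ x := rfl
            have h2 : algebraMap (C ⊗[F] A) (R' ⧸ J) x = Ideal.Quotient.mk J (ψ x) := by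
              rw [← Ideal.Quotient.mk_algebraMap]
              rfl
            rw [h1, h2]
            exact key x } with hgB'
      -- existence via formal smoothness of B over C⊗A
      set φ : B →ₐ[C ⊗[F] A] R' := Algebra.FormallySmooth.lift J ⟨2, hJ⟩ gB' with hφdef
      have hφ : ∀ b : B, Ideal.Quotient.mk J (φ b) = gbar (Ideal.Quotient.mk I b) := fun b =>
        Algebra.FormallySmooth.mk_lift J ⟨2, hJ⟩ gB' b
      have hφI : ∀ x ∈ I, φ x = 0 := by
        intro x hx
        have hle : I ≤ RingHom.ker φ.toRingHom := by
          rw [hI, Ideal.span_le]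
          rintro _ ⟨c, rfl⟩
          have e1 : h₁ c = algebraMap (C ⊗[F] A) B (c ⊗ₜ[F] 1) := by
            show h₁ c = Algebra.TensorProduct.productMap h₁ h₂ (c ⊗ₜ[F] 1)
            rw [Algebra.TensorProduct.productMap_apply_tmul, map_one, mul_one]
          have e2 : φ (h₁ c) = ρ c := by
            rw [e1, φ.commutes]
            show ψ (c ⊗ₜ[F] 1) = ρ c
            rw [hψtmul, map_one, mul_one]
          have e3 : φ (fC (c ^ q)) = ρ c := by
            rw [map_pow, map_pow, hρc, ← hφ (fC c), hΦmk]
          show φ (h₁ c - fC (c ^ q)) = 0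
          rw [map_sub, e2, e3, sub_self]
        exact hle hx
      set ghatrh : (B ⧸ I) →+* R' := Ideal.Quotient.lift I φ.toRingHom hφI with hghatrh
      have hghatmk : ∀ b : B, ghatrh (Ideal.Quotient.mk I b) = φ b := fun b => rfl
      set ghat : (B ⧸ I) →ₐ[A] R' :=
        { toRingHom := ghatrh,
          commutes' := by
            intro a
            show ghatrh (Ideal.Quotient.mk I (h₂ a)) = algebraMap A R' a
            rw [hghatmk]
            have e1 : h₂ a = algebraMap (C ⊗[F] A) B ((1 : C) ⊗ₜ[F] a) := by
              show h₂ a = Algebra.TensorProduct.productMap h₁ h₂ ((1 : C) ⊗ₜ[F] a)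
              rw [Algebra.TensorProduct.productMap_apply_tmul, map_one, one_mul]
            rw [e1, φ.commutes]
            show ψ ((1 : C) ⊗ₜ[F] a) = algebraMap A R' a
            rw [hψtmul, map_one, one_mul] } with hghat
      have hghatlift : (Ideal.Quotient.mkₐ A J).comp ghat = gbar := by
        ext x
        obtain ⟨b, rfl⟩ := Ideal.Quotient.mk_surjective x
        show Ideal.Quotient.mk J (ghatrh (Ideal.Quotient.mk I b)) = gbar (Ideal.Quotient.mk I b)
        rw [hghatmk, hφ]
      -- uniqueness via formal unramifiedness of B over C⊗A
      have hcomm : ∀ (g : (B ⧸ I) →ₐ[A] R'), (Ideal.Quotient.mkₐ A J).comp g = gbar →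
          ∀ x : C ⊗[F] A, (g.toRingHom.comp (Ideal.Quotient.mk I))
            ((algebraMap (C ⊗[F] A) B) x) = (algebraMap (C ⊗[F] A) R') x := by
        intro g hg x
        have hgpt : ∀ b : B ⧸ I, Ideal.Quotient.mk J (g b) = gbar b := fun b =>
          congrArg (fun (t : (B ⧸ I) →ₐ[A] R' ⧸ J) => t b) hg
        show g (Ideal.Quotient.mk I (Algebra.TensorProduct.productMap h₁ h₂ x)) = ψ x
        induction x using TensorProduct.induction_on with
        | zero => simp
        | tmul c a =>
            rw [Algebra.TensorProduct.productMap_apply_tmul, hψtmul, map_mul, map_mul]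
            congr 1
            · rw [hgen c, map_pow, map_pow, map_pow, hρc, ← hgpt, hΦmk]
            · exact g.commutes a
        | add x y hx hy => simp [map_add, hx, hy]
      have uniq : ∀ g g' : (B ⧸ I) →ₐ[A] R',
          (Ideal.Quotient.mkₐ A J).comp g = gbar → (Ideal.Quotient.mkₐ A J).comp g' = gbar →
          g = g' := by
        intro g g' hg hg'
        have heq : AlgHom.mk (g.toRingHom.comp (Ideal.Quotient.mk I)) (hcomm g hg)
            = AlgHom.mk (g'.toRingHom.comp (Ideal.Quotient.mk I)) (hcomm g' hg') := by
          apply Algebra.FormallyUnramified.comp_injective (R := C ⊗[F] A) (A := B) J hJ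
          ext b
          show Ideal.Quotient.mk J (g (Ideal.Quotient.mk I b))
            = Ideal.Quotient.mk J (g' (Ideal.Quotient.mk I b))
          have e1 : Ideal.Quotient.mk J (g (Ideal.Quotient.mk I b))
              = gbar (Ideal.Quotient.mk I b) :=
            congrArg (fun (t : (B ⧸ I) →ₐ[A] R' ⧸ J) => t (Ideal.Quotient.mk I b)) hg
          have e2 : Ideal.Quotient.mk J (g' (Ideal.Quotient.mk I b))
              = gbar (Ideal.Quotient.mk I b) :=
            congrArg (fun (t : (B ⧸ I) →ₐ[A] R' ⧸ J) => t (Ideal.Quotient.mk I b)) hg'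
          rw [e1, e2]
        ext x
        obtain ⟨b, rfl⟩ := Ideal.Quotient.mk_surjective x
        exact congrArg (fun (t : B →ₐ[C ⊗[F] A] R') => t b) heq
      exact ⟨ghat, hghatlift, fun g hg => uniq g ghat hg hghatlift⟩
    constructor
    · intro g₁ g₂ hg
      obtain ⟨g, hg', huniq⟩ := main ((Ideal.Quotient.mkₐ A J).comp g₁)
      rw [huniq g₁ rfl, huniq g₂ hg.symm]
    · intro gbar
      obtain ⟨g, hg, -⟩ := main gbar
      exact ⟨g, hg⟩
  · -- finite presentation
    haveI : IsScalarTower F A (B ⧸ I) := IsScalarTower.of_algebraMap_eq (fun x => by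
      show algebraMap F (B ⧸ I) x = ((Ideal.Quotient.mk I).comp h₂.toRingHom) (algebraMap F A x)
      rw [← Ideal.Quotient.mk_algebraMap]
      show Ideal.Quotient.mk I (algebraMap F B x) = Ideal.Quotient.mk I (h₂ (algebraMap F A x))
      rw [h₂.commutes])
    haveI : Algebra.FiniteType F (B ⧸ I) :=
      hB.of_surjective (Ideal.Quotient.mkₐ F I) (Ideal.Quotient.mkₐ_surjective F I)
    haveI : Algebra.FiniteType A (B ⧸ I) :=
      Algebra.FiniteType.of_restrictScalars_finiteType (R := F) (S := A) (A := B ⧸ I)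
    haveI : Algebra.FiniteType F A := hA
    haveI : IsNoetherianRing A := Algebra.FiniteType.isNoetherianRing F A
    exact Algebra.FinitePresentation.of_finiteType.mp ‹_›
end
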